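/- The span of {φ_0, φ_1, …, φ_{N−2}}, where φ_k(x) = c_k(L_k(x) − L_{k+2}(x)) and c_k = 1/√(4k+6), equals the space V_N = {v ∈ P_N : v(±1) = 0} of polynomials of degree at most N vanishing at ±1. -/

import Mathlib

open Polynomial

/-- The `n`-th Legendre polynomial, via Rodrigues' formula. -/
noncomputable def legendre (n : ℕ) : Polynomial ℝ :=
  C ((1 : ℝ) / (2 ^ n * n.factorial)) * derivative^[n] ((X ^ 2 - 1) ^ n)

/-- The basis polynomial φ_k = c_k (L_k - L_{k+2}), c_k = 1/√(4k+6). -/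
noncomputable def phiPoly (k : ℕ) : Polynomial ℝ :=
  (1 / Real.sqrt (4 * k + 6)) • (legendre k - legendre (k + 2))

/-- V_N = {v ∈ P_N : v(1) = v(-1) = 0}. -/
noncomputable def VN (N : ℕ) : Submodule ℝ (Polynomial ℝ) :=
  degreeLE ℝ (N : ℕ) ⊓ LinearMap.ker (leval (1 : ℝ)) ⊓ LinearMap.ker (leval (-1 : ℝ))

private lemma xsq_factor : ((X : Polynomial ℝ) ^ 2 - 1) = (X - C 1) * (X + C 1) := by
  rw [C_1]; ring

private lemma natDegree_q (n : ℕ) : (((X : Polynomial ℝ) ^ 2 - 1) ^ n).natDegree = 2 * n := by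
  rw [natDegree_pow]
  have : ((X : Polynomial ℝ) ^ 2 - 1) = X ^ 2 - C 1 := by rw [C_1]
  rw [this, natDegree_X_pow_sub_C, mul_comm]

private lemma monic_q (n : ℕ) : (((X : Polynomial ℝ) ^ 2 - 1) ^ n).Monic := by
  have : ((X : Polynomial ℝ) ^ 2 - 1) = X ^ 2 - C 1 := by rw [C_1]
  rw [this]
  exact (monic_X_pow_sub_C (1 : ℝ) two_ne_zero).pow n

private lemma legendre_coeff_ne (n : ℕ) : (legendre n).coeff n ≠ 0 := by
  have hD : (derivative^[n] (((X : Polynomial ℝ) ^ 2 - 1) ^ n)).coeff n =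
      ((n + n).descFactorial n : ℝ) := by
    rw [coeff_iterate_derivative]
    have h2n : (((X : Polynomial ℝ) ^ 2 - 1) ^ n).coeff (n + n) = 1 := by
      have := (monic_q n).leadingCoeff
      rwa [leadingCoeff, natDegree_q, two_mul] at this
    rw [h2n, nsmul_eq_mul, mul_one]
  have hc : ((1 : ℝ) / (2 ^ n * n.factorial)) ≠ 0 := by
    positivity
  rw [legendre, coeff_C_mul, hD]
  have hpos : (n + n).descFactorial n ≠ 0 := by
    rw [Ne, Nat.descFactorial_eq_zero_iff_lt]; omega
  have hne : ((n + n).descFactorial n : ℝ) ≠ 0 := Nat.cast_ne_zero.mpr hpos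
  exact mul_ne_zero hc hne

private lemma legendre_natDegree (n : ℕ) : (legendre n).natDegree = n := by
  refine le_antisymm ?_ (le_natDegree_of_ne_zero (legendre_coeff_ne n))
  calc (legendre n).natDegree
      ≤ (derivative^[n] (((X : Polynomial ℝ) ^ 2 - 1) ^ n)).natDegree := by
        rw [legendre]; exact natDegree_C_mul_le _ _
    _ ≤ (((X : Polynomial ℝ) ^ 2 - 1) ^ n).natDegree - n := natDegree_iterate_derivative _ _
    _ ≤ n := by rw [natDegree_q]; omega

private lemma legendre_ne_zero (n : ℕ) : legendre n ≠ 0 := fun h => by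
  simpa [h] using legendre_coeff_ne n

private lemma legendre_degree (n : ℕ) : (legendre n).degree = n := by
  rw [degree_eq_natDegree (legendre_ne_zero n), legendre_natDegree]

private lemma eval_iter_one (n : ℕ) :
    eval 1 (derivative^[n] (((X : Polynomial ℝ) ^ 2 - 1) ^ n)) = 2 ^ n * (n.factorial : ℝ) := by
  rw [xsq_factor, mul_pow, iterate_derivative_mul, eval_finset_sum]
  rw [Finset.sum_eq_single 0]
  · rw [Nat.sub_zero, iterate_derivative_X_sub_pow_self]
    simp [eval_pow]
    ring
  · intro k hk hk0
    rw [Finset.mem_range, Nat.lt_succ_iff] at hk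
    rw [iterate_derivative_X_sub_pow]
    have : n - (n - k) = k := by omega
    rw [this]
    simp [eval_pow, zero_pow hk0]
  · intro h; simp at h

private lemma eval_iter_neg_one (n : ℕ) :
    eval (-1) (derivative^[n] (((X : Polynomial ℝ) ^ 2 - 1) ^ n)) = (-2 : ℝ) ^ n * (n.factorial : ℝ) := by
  rw [xsq_factor, mul_pow, iterate_derivative_mul, eval_finset_sum]
  rw [Finset.sum_eq_single n]
  · have h : derivative^[n] ((X + C 1 : Polynomial ℝ) ^ n) = (n.factorial : Polynomial ℝ) := by
      rw [iterate_derivative_X_add_pow, Nat.sub_self, pow_zero, nsmul_one,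
        Nat.descFactorial_self]
    rw [Nat.sub_self, h]
    simp only [Nat.choose_self, one_smul, Function.iterate_zero, id_eq, eval_mul, eval_pow,
      eval_sub, eval_X, eval_C, eval_natCast]
    norm_num
  · intro k hk hkn
    rw [Finset.mem_range, Nat.lt_succ_iff] at hk
    rw [iterate_derivative_X_add_pow]
    have hnk : n - k ≠ 0 := by omega
    simp [eval_pow, zero_pow hnk]
  · intro h; simp at h

private lemma legendre_eval_one (n : ℕ) : eval 1 (legendre n) = 1 := by
  rw [legendre, eval_mul, eval_C, eval_iter_one]
  have h1 : (2 : ℝ) ^ n ≠ 0 := by positivity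
  have h2 : (n.factorial : ℝ) ≠ 0 := by positivity
  field_simp

private lemma legendre_eval_neg_one (n : ℕ) : eval (-1) (legendre n) = (-1) ^ n := by
  rw [legendre, eval_mul, eval_C, eval_iter_neg_one]
  have h1 : (2 : ℝ) ^ n ≠ 0 := by positivity
  have h2 : (n.factorial : ℝ) ≠ 0 := by positivity
  have : ((-2 : ℝ)) ^ n = (-1) ^ n * 2 ^ n := by
    rw [← neg_one_mul, mul_pow]
  rw [this]
  field_simp

private lemma ck_ne_zero (k : ℕ) : (1 / Real.sqrt (4 * k + 6) : ℝ) ≠ 0 := by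
  have : (0 : ℝ) < Real.sqrt (4 * k + 6) := Real.sqrt_pos.mpr (by positivity)
  positivity

private lemma phi_natDegree (k : ℕ) : (phiPoly k).natDegree = k + 2 := by
  rw [phiPoly, smul_eq_C_mul, natDegree_C_mul (ck_ne_zero k),
    natDegree_sub_eq_right_of_natDegree_lt]
  · exact legendre_natDegree (k + 2)
  · rw [legendre_natDegree, legendre_natDegree]; omega

private lemma phi_ne_zero (k : ℕ) : phiPoly k ≠ 0 := by
  intro h
  have := phi_natDegree k
  rw [h, natDegree_zero] at this
  omega

private lemma phi_degree (k : ℕ) : (phiPoly k).degree = (k + 2 : ℕ) := by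
  rw [degree_eq_natDegree (phi_ne_zero k), phi_natDegree]

private lemma phi_eval_one (k : ℕ) : eval 1 (phiPoly k) = 0 := by
  rw [phiPoly, eval_smul, eval_sub, legendre_eval_one, legendre_eval_one]
  simp

private lemma phi_eval_neg_one (k : ℕ) : eval (-1) (phiPoly k) = 0 := by
  rw [phiPoly, eval_smul, eval_sub, legendre_eval_neg_one, legendre_eval_neg_one]
  have : ((-1 : ℝ)) ^ (k + 2) = (-1) ^ k := by
    rw [pow_add]; ring
  rw [this]
  simp

private lemma phi_li (m : ℕ) : LinearIndependent ℝ (fun k : Fin m => phiPoly k) := by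
  induction m with
  | zero => exact linearIndependent_empty_type
  | succ m ih =>
    apply linearIndependent_fin_succ'.mpr
    refine ⟨ih, ?_⟩
    intro hmem
    have h1 : Submodule.span ℝ (Set.range (Fin.init fun k : Fin (m + 1) => phiPoly ↑k))
        ≤ degreeLT ℝ (m + 2) := by
      rw [Submodule.span_le]
      rintro _ ⟨i, rfl⟩
      rw [SetLike.mem_coe, mem_degreeLT]
      show (phiPoly ↑(Fin.castSucc i)).degree < ((m + 2 : ℕ) : WithBot ℕ)
      rw [phi_degree, Nat.cast_lt]
      have h := i.isLt
      simp only [Fin.coe_castSucc]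
      omega
    have h2 := h1 hmem
    rw [mem_degreeLT] at h2
    have h3 : (phiPoly ↑(Fin.last m)).degree = ((m + 2 : ℕ) : WithBot ℕ) := by
      rw [phi_degree, Fin.val_last]
    rw [h3] at h2
    exact lt_irrefl _ h2

private lemma degreeLE_eq_degreeLT (n : ℕ) :
    degreeLE ℝ (n : WithBot ℕ) = degreeLT ℝ (n + 1) := by
  ext p
  rw [mem_degreeLE, mem_degreeLT]
  rcases eq_or_ne p 0 with rfl | hp
  · simp [degree_zero]
  · rw [degree_eq_natDegree hp, Nat.cast_le, Nat.cast_lt, Nat.lt_succ_iff]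

/-- span{φ_0, …, φ_{N-2}} = V_N. -/
theorem span_phi_eq_VN (N : ℕ) (hN : 2 ≤ N) :
    Submodule.span ℝ (Set.range fun k : Fin (N - 1) => phiPoly k) = VN N := by
  -- span ≤ VN
  have hle : Submodule.span ℝ (Set.range fun k : Fin (N - 1) => phiPoly k) ≤ VN N := by
    rw [Submodule.span_le]
    rintro _ ⟨k, rfl⟩
    have hk : (k : ℕ) + 2 ≤ N := by have := k.isLt; omega
    refine ⟨⟨?_, ?_⟩, ?_⟩
    · rw [SetLike.mem_coe, mem_degreeLE, phi_degree, Nat.cast_le]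
      exact hk
    · rw [SetLike.mem_coe, LinearMap.mem_ker, leval_apply]
      exact phi_eval_one k
    · rw [SetLike.mem_coe, LinearMap.mem_ker, leval_apply]
      exact phi_eval_neg_one k
  -- the ambient space W
  set W : Submodule ℝ (Polynomial ℝ) := degreeLT ℝ (N + 1) with hW
  haveI : Module.Finite ℝ W := Module.Finite.equiv (degreeLTEquiv ℝ (N + 1)).symm
  have hfrW : Module.finrank ℝ W = N + 1 := by
    rw [(degreeLTEquiv ℝ (N + 1)).finrank_eq, Module.finrank_fin_fun]
  -- the evaluation map
  set f : W →ₗ[ℝ] ℝ × ℝ :=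
    ((leval (1 : ℝ)).comp W.subtype).prod ((leval (-1 : ℝ)).comp W.subtype) with hf
  have hsurj : Function.Surjective f := by
    rintro ⟨a, b⟩
    have hp : (C ((a - b) / 2) * X + C ((a + b) / 2)) ∈ W := by
      rw [hW, mem_degreeLT]
      refine lt_of_le_of_lt degree_linear_le ?_
      exact_mod_cast by omega
    refine ⟨⟨_, hp⟩, ?_⟩
    simp [hf, leval_apply]
    constructor <;> ring
  have hker : Module.finrank ℝ (LinearMap.ker f) = N - 1 := by
    have h1 := f.finrank_range_add_finrank_ker
    rw [LinearMap.range_eq_top.mpr hsurj, finrank_top] at h1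
    have h2 : Module.finrank ℝ (ℝ × ℝ) = 2 := by
      simp [Module.finrank_prod]
    rw [h2, hfrW] at h1
    omega
  -- VN ≤ image of ker f
  have hVNle : VN N ≤ Submodule.map W.subtype (LinearMap.ker f) := by
    rintro p ⟨⟨hdeg, h1⟩, h2⟩
    have hpW : p ∈ W := by
      rw [hW, ← degreeLE_eq_degreeLT]
      exact hdeg
    refine ⟨⟨p, hpW⟩, ?_, rfl⟩
    have he1 : eval 1 p = 0 := by rw [← leval_apply]; exact LinearMap.mem_ker.mp h1
    have he2 : eval (-1) p = 0 := by rw [← leval_apply]; exact LinearMap.mem_ker.mp h2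
    show f ⟨p, hpW⟩ = 0
    have : f ⟨p, hpW⟩ = (eval 1 p, eval (-1) p) := by simp [hf, leval_apply]
    rw [this, he1, he2]
    rfl
  haveI : Module.Finite ℝ (Submodule.map W.subtype (LinearMap.ker f)) :=
    Module.Finite.equiv (Submodule.equivMapOfInjective W.subtype W.injective_subtype
      (LinearMap.ker f))
  haveI : FiniteDimensional ℝ (VN N) := Submodule.finiteDimensional_of_le hVNle
  have hVNfr : Module.finrank ℝ (VN N) ≤ N - 1 := by
    calc Module.finrank ℝ (VN N)
        ≤ Module.finrank ℝ (Submodule.map W.subtype (LinearMap.ker f)) :=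
          Submodule.finrank_mono hVNle
      _ = Module.finrank ℝ (LinearMap.ker f) :=
          (LinearEquiv.finrank_eq (Submodule.equivMapOfInjective W.subtype
            W.injective_subtype (LinearMap.ker f))).symm
      _ = N - 1 := hker
  have hspanfr : Module.finrank ℝ
      (Submodule.span ℝ (Set.range fun k : Fin (N - 1) => phiPoly k)) = N - 1 := by
    rw [finrank_span_eq_card (phi_li (N - 1)), Fintype.card_fin]
  exact Submodule.eq_of_le_of_finrank_le hle (by rw [hspanfr]; exact hVNfr)
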